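/- Let s ≤ t be integers with s, t ≥ 2, let D = lcm(1, 2, ..., st), and let α_{i,j} = M + i + jD for 1 ≤ i ≤ s, 1 ≤ j ≤ t, where M is an integer such that no prime p > st divides any α_{i,j}, provided p divides q + rD for some integers q, r with 0 < |q| < s and |r| < t. Then for all such indices, gcd(α_{i,j}, α_{k,l}) divides i − k. -/

import Mathlib

/-- Claim: `gcd(α_{i,j}, α_{k,l}) ∣ i - k` for `α_{i,j} = M + i + j * D`. -/
theorem gcd_alpha_dvd (s t : ℕ) (hs : 2 ≤ s) (hst : s ≤ t)
    (D : ℕ) (hD : D = (Finset.Icc 1 (s * t)).lcm id)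
    (M : ℤ)
    (hM : ∀ p : ℕ, p.Prime → s * t < p →
      (∃ q r : ℤ, 0 < |q| ∧ |q| < s ∧ |r| < t ∧ (p : ℤ) ∣ q + r * D) →
      ∀ i j : ℕ, 1 ≤ i → i ≤ s → 1 ≤ j → j ≤ t →
        ¬ ((p : ℤ) ∣ M + i + j * D)) :
    ∀ i j k l : ℕ, 1 ≤ i → i ≤ s → 1 ≤ j → j ≤ t → 1 ≤ k → k ≤ s → 1 ≤ l → l ≤ t →
      (Int.gcd (M + i + j * D) (M + k + l * D) : ℤ) ∣ (i : ℤ) - k := by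
  intro i j k l hi1 hi2 hj1 hj2 hk1 hk2 hl1 hl2
  by_cases hik : (i : ℤ) = k
  · rw [hik, sub_self]; exact dvd_zero _
  set α : ℤ := M + i + j * D with hα
  set β : ℤ := M + k + l * D with hβ
  set q : ℤ := (i : ℤ) - k with hq
  set r : ℤ := (j : ℤ) - l with hr
  have hq0 : q ≠ 0 := sub_ne_zero.mpr hik
  have habsq0 : 0 < |q| := abs_pos.mpr hq0
  have habsq : |q| < s := by
    rw [abs_lt]
    constructor <;> [skip; skip] <;>
      · simp only [hq]
        omega
  have habsr : |r| < t := by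
    rw [abs_lt]
    constructor <;>
      · simp only [hr]
        omega
  have hst0 : s * t ≠ 0 := Nat.mul_ne_zero (by omega) (by omega)
  have hD0 : D ≠ 0 := by
    subst hD
    intro h
    rw [Finset.lcm_eq_zero_iff] at h
    simp only [Set.mem_image, Finset.mem_coe, Finset.mem_Icc, id] at h
    obtain ⟨x, ⟨hx1, _⟩, hx0⟩ := h
    omega
  set g : ℕ := Int.gcd α β with hg
  have hgα : (g : ℤ) ∣ α := Int.gcd_dvd_left _ _
  have hgβ : (g : ℤ) ∣ β := Int.gcd_dvd_right _ _
  have hαβ : α - β = q + r * D := by simp only [hα, hβ, hq, hr]; push_cast; ring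
  have hgqr : (g : ℤ) ∣ q + r * D := hαβ ▸ dvd_sub hgα hgβ
  -- g ≠ 0
  have hg0 : g ≠ 0 := by
    intro h
    have := Int.gcd_eq_zero_iff.mp h
    obtain ⟨hα0, hβ0⟩ := this
    have hqrD : q + r * D = 0 := by rw [← hαβ, hα0, hβ0, sub_zero]
    obtain ⟨p, hple, hp⟩ := Nat.exists_infinite_primes (s * t + 1)
    exact hM p hp (by omega) ⟨q, r, habsq0, habsq, habsr, by rw [hqrD]; exact dvd_zero _⟩
      i j hi1 hi2 hj1 hj2 (by rw [← hα, hα0]; exact dvd_zero _)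
  -- any prime dividing g is ≤ s*t
  have hsmall : ∀ p : ℕ, p.Prime → p ∣ g → p ≤ s * t := by
    intro p hp hpg
    by_contra h
    push_neg at h
    have hpz : (p : ℤ) ∣ (g : ℤ) := Int.natCast_dvd_natCast.mpr hpg
    exact hM p hp h ⟨q, r, habsq0, habsq, habsr, hpz.trans hgqr⟩
      i j hi1 hi2 hj1 hj2 (hpz.trans hgα)
  -- g ∣ D
  have hgD : g ∣ D := by
    rw [← Nat.factorization_le_iff_dvd hg0 hD0, Finsupp.le_def]
    intro p
    by_cases hp : p.Prime
    · set b := g.factorization p with hb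
      rcases Nat.eq_zero_or_pos b with hb0 | hb1
      · simp [hb0]
      have hpb : p ^ b ∣ g := Nat.ordProj_dvd g p
      have hpg : p ∣ g := (dvd_pow_self p (by omega : b ≠ 0)).trans hpb
      have hple : p ≤ s * t := hsmall p hp hpg
      set e := Nat.log p (s * t) with he
      have he1 : 1 ≤ e := by
        rw [he, Nat.le_log_iff_pow_le hp.one_lt hst0, pow_one]
        exact hple
      have hpe : p ^ e ≤ s * t := Nat.pow_log_le_self p hst0
      have hpeD : p ^ e ∣ D := by
        rw [hD]
        exact Finset.dvd_lcm (f := id) (Finset.mem_Icc.mpr ⟨Nat.one_le_iff_ne_zero.mpr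
          (pow_ne_zero e hp.pos.ne'), hpe⟩)
      have hbe : b ≤ e := by
        by_contra hbe
        push_neg at hbe
        have hpeg : p ^ e ∣ g := (pow_dvd_pow p hbe.le).trans hpb
        have hpeq : ((p : ℤ)) ^ e ∣ q := by
          have h1 : ((p : ℤ)) ^ e ∣ q + r * D := by
            have := Int.natCast_dvd_natCast.mpr hpeg
            push_cast at this
            exact this.trans hgqr
          have h2 : ((p : ℤ)) ^ e ∣ r * D := by
            have := Int.natCast_dvd_natCast.mpr hpeD
            push_cast at this
            exact Dvd.dvd.mul_left this r
          have := dvd_sub h1 h2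
          simpa using this
        have hles : (p : ℤ) ^ e < s := lt_of_le_of_lt
          (Int.le_of_dvd habsq0 ((dvd_abs _ _).mpr hpeq)) habsq
        have hles' : p ^ e < s := by exact_mod_cast hles
        have hps : p < s := lt_of_le_of_lt (Nat.le_self_pow (by omega) p) hles'
        have h1 : p ^ (e + 1) < s * t := by
          calc p ^ (e + 1) = p ^ e * p := by ring
            _ < s * s := Nat.mul_lt_mul'' hles' hps
            _ ≤ s * t := Nat.mul_le_mul_left s hst
        have h2 : s * t < p ^ (e + 1) := Nat.lt_pow_succ_log_self hp.one_lt (s * t)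
        omega
      have hpbD : p ^ b ∣ D := (pow_dvd_pow p hbe).trans hpeD
      exact (Nat.Prime.pow_dvd_iff_le_factorization hp hD0).mp hpbD
    · simp [Nat.factorization_eq_zero_of_not_prime _ hp]
  -- conclude
  have hgDz : (g : ℤ) ∣ (D : ℤ) := Int.natCast_dvd_natCast.mpr hgD
  have hgrD : (g : ℤ) ∣ r * D := Dvd.dvd.mul_left hgDz r
  have : (g : ℤ) ∣ q := by
    have := dvd_sub hgqr hgrD
    simpa using this
  exact this
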